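/- Let (X_k) be a d-type GW process and a ∈ (0,∞)^d with f_i(a) < ∞, and let (X̄_k) be the associated process with respect to a. Then for every initial state x_0, all times k_1 ≤ … ≤ k_j, all states x_1,…,x_j ∈ ℕ^d, and every n ∈ ℕ^d with P_{x_0}(N = n) > 0, the conditional distributions agree: P_{x_0}(X_{k_1}=x_1,…,X_{k_j}=x_j | N = n) = P_{x_0}(X̄_{k_1}=x_1,…,X̄_{k_j}=x_j | N̄ = n). -/

import Mathlib

open MeasureTheory Filter Topology
open scoped ENNReal NNReal

noncomputable section

namespace GW

variable {d : ℕ}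

/-- `a^k = ∏_j a_j^{k_j}` for a multi-index `k`. -/
def npow (a : Fin d → ℝ) (k : Fin d → ℕ) : ℝ := ∏ j, a j ^ k j

/-- Dirac mass at `0` on `ℕ^d`. -/
def delta : (Fin d → ℕ) → ℝ := fun k => if k = 0 then 1 else 0

/-- Convolution of two (sub)probability weight functions on `ℕ^d`. -/
def conv (p q : (Fin d → ℕ) → ℝ) : (Fin d → ℕ) → ℝ :=
  fun k => ∑' a : {a : Fin d → ℕ // a ≤ k}, p a.1 * q (k - a.1)

/-- `n`-fold convolution power `p^{*n}` (with `p^{*0} = δ_0`). -/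
def convIter (p : (Fin d → ℕ) → ℝ) : ℕ → (Fin d → ℕ) → ℝ
  | 0 => delta
  | n + 1 => conv p (convIter p n)

/-- One-step transition probabilities of the multitype GW process:
`P_1(x, ·) = p_1^{*x_1} * ⋯ * p_d^{*x_d}`. -/
def trans (p : Fin d → (Fin d → ℕ) → ℝ) (x : Fin d → ℕ) : (Fin d → ℕ) → ℝ :=
  (List.ofFn (fun i => convIter (p i) (x i))).foldr conv delta

/-- `p` is a probability mass function on `ℕ^d`. -/
structure IsPMF (p : (Fin d → ℕ) → ℝ) : Prop where
  nonneg : ∀ k, 0 ≤ p k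
  hasSum : HasSum p 1

/-- `μ x` is the law on path space of the multitype GW process with offspring
distributions `p` started at `x`: a probability measure whose finite-dimensional
distributions are products of one-step GW transition probabilities. -/
def IsGW (p : Fin d → (Fin d → ℕ) → ℝ)
    (μ : (Fin d → ℕ) → Measure (ℕ → Fin d → ℕ)) : Prop :=
  (∀ x, IsProbabilityMeasure (μ x)) ∧
  ∀ (x : Fin d → ℕ) (k : ℕ) (xs : ℕ → Fin d → ℕ), xs 0 = x →
    μ x {ω | ∀ j ≤ k, ω j = xs j}
      = ENNReal.ofReal (∏ j ∈ Finset.range k, trans p (xs j) (xs (j + 1)))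

/-- Total progeny of type `i` along a path (valued in `ℝ≥0∞`). -/
def Ntot (ω : ℕ → Fin d → ℕ) (i : Fin d) : ℝ≥0∞ := ∑' k, (ω k i : ℝ≥0∞)

lemma npow_pos {a : Fin d → ℝ} (ha : ∀ i, 0 < a i) (k : Fin d → ℕ) : 0 < npow a k :=
  Finset.prod_pos fun i _ => pow_pos (ha i) _

lemma npow_sub_mul (a : Fin d → ℝ) {u k : Fin d → ℕ} (h : u ≤ k) :
    npow a u * npow a (k - u) = npow a k := by
  unfold npow
  rw [← Finset.prod_mul_distrib]
  refine Finset.prod_congr rfl fun i _ => ?_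
  rw [← pow_add]
  congr 1
  have hui : u i ≤ k i := h i
  simp only [Pi.sub_apply]
  omega

lemma delta_scale (a : Fin d → ℝ) (k : Fin d → ℕ) : delta k = npow a k * delta k := by
  unfold delta
  split
  · subst ‹k = 0›; simp [npow]
  · simp

lemma conv_scale (a : Fin d → ℝ) {q q' r r' : (Fin d → ℕ) → ℝ} {c1 c2 : ℝ}
    (hq : ∀ k, q' k = npow a k * q k * c1) (hr : ∀ k, r' k = npow a k * r k * c2)
    (k : Fin d → ℕ) :
    conv q' r' k = npow a k * conv q r k * (c1 * c2) := by
  unfold conv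
  have h : ∀ u : {u : Fin d → ℕ // u ≤ k}, q' u.1 * r' (k - u.1)
      = (npow a k * (c1 * c2)) * (q u.1 * r (k - u.1)) := by
    intro u
    rw [hq, hr, ← npow_sub_mul a u.2]
    ring
  rw [tsum_congr h, tsum_mul_left]
  ring

lemma convIter_scale (a : Fin d → ℝ) {q q' : (Fin d → ℕ) → ℝ} {c : ℝ}
    (h : ∀ k, q' k = npow a k * q k * c) :
    ∀ m k, convIter q' m k = npow a k * convIter q m k * c ^ m
  | 0, k => by simpa [convIter] using delta_scale a k
  | m + 1, k => by
    show conv q' (convIter q' m) k = npow a k * conv q (convIter q m) k * c ^ (m + 1)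
    rw [conv_scale a h (convIter_scale a h m) k, pow_succ]
    ring

lemma foldr_conv_scale (a : Fin d → ℝ) :
    ∀ (l : List ((((Fin d → ℕ) → ℝ) × ((Fin d → ℕ) → ℝ)) × ℝ)),
    (∀ x ∈ l, ∀ k, x.1.1 k = npow a k * x.1.2 k * x.2) →
    ∀ k, (l.map (fun x => x.1.1)).foldr conv delta k
      = npow a k * (l.map (fun x => x.1.2)).foldr conv delta k * (l.map (fun x => x.2)).prod
  | [], _, k => by
    simp only [List.map_nil, List.foldr_nil, List.prod_nil, mul_one]
    exact delta_scale a k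
  | x :: xs, h, k => by
    simp only [List.map_cons, List.foldr_cons, List.prod_cons]
    rw [conv_scale a (h x List.mem_cons_self)
      (foldr_conv_scale a xs (fun y hy => h y (List.mem_cons_of_mem x hy))) k]

lemma trans_scale (a : Fin d → ℝ) (p pbar : Fin d → (Fin d → ℕ) → ℝ) (c : Fin d → ℝ)
    (h : ∀ i k, pbar i k = npow a k * p i k * c i) (x y : Fin d → ℕ) :
    trans pbar x y = npow a y * trans p x y * ∏ i, c i ^ x i := by
  have := foldr_conv_scale a
    (List.ofFn (fun i => ((convIter (pbar i) (x i), convIter (p i) (x i)), c i ^ x i)))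
    (by
      intro z hz k
      obtain ⟨i, rfl⟩ := List.mem_ofFn.mp hz
      exact convIter_scale a (h i) (x i) k) y
  simpa [trans, List.map_ofFn, Function.comp_def, List.prod_ofFn] using this

lemma delta_nonneg (k : Fin d → ℕ) : 0 ≤ delta k := by
  unfold delta; split <;> norm_num

lemma conv_nonneg' {q r : (Fin d → ℕ) → ℝ} (hq : ∀ k, 0 ≤ q k) (hr : ∀ k, 0 ≤ r k)
    (k : Fin d → ℕ) : 0 ≤ conv q r k :=
  tsum_nonneg fun u => mul_nonneg (hq _) (hr _)

lemma convIter_nonneg {q : (Fin d → ℕ) → ℝ} (hq : ∀ k, 0 ≤ q k) :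
    ∀ m k, 0 ≤ convIter q m k
  | 0, k => delta_nonneg k
  | m + 1, k => conv_nonneg' hq (convIter_nonneg hq m) k

lemma foldr_conv_nonneg : ∀ (l : List ((Fin d → ℕ) → ℝ)),
    (∀ q ∈ l, ∀ k, 0 ≤ q k) → ∀ k, 0 ≤ l.foldr conv delta k
  | [], _, k => delta_nonneg k
  | x :: xs, h, k => conv_nonneg' (h x List.mem_cons_self)
      (foldr_conv_nonneg xs (fun y hy => h y (List.mem_cons_of_mem x hy))) k

lemma trans_nonneg {p : Fin d → (Fin d → ℕ) → ℝ} (hp : ∀ i k, 0 ≤ p i k)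
    (x y : Fin d → ℕ) : 0 ≤ trans p x y :=
  foldr_conv_nonneg _ (by
    intro q hq k
    obtain ⟨i, rfl⟩ := List.mem_ofFn.mp hq
    exact convIter_nonneg (hp i) (x i) k) y

lemma conv_delta_left (q : (Fin d → ℕ) → ℝ) (k : Fin d → ℕ) : conv delta q k = q k := by
  unfold conv
  rw [tsum_eq_single (⟨0, fun i => Nat.zero_le _⟩ : {a : Fin d → ℕ // a ≤ k})]
  · simp [delta]
  · intro b hb
    have hb1 : b.1 ≠ 0 := fun h => hb (Subtype.ext h)
    simp [delta, hb1]

lemma foldr_replicate_delta : ∀ (n : ℕ) (k : Fin d → ℕ),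
    (List.replicate n (delta (d := d))).foldr conv delta k = delta k
  | 0, _ => rfl
  | n + 1, k => by
    rw [List.replicate_succ, List.foldr_cons, conv_delta_left]
    exact foldr_replicate_delta n k

lemma trans_zero (p : Fin d → (Fin d → ℕ) → ℝ) (y : Fin d → ℕ) : trans p 0 y = delta y := by
  unfold trans
  have h1 : (List.ofFn fun i => convIter (p i) ((0 : Fin d → ℕ) i))
      = List.replicate d delta := by
    simp only [Pi.zero_apply]
    exact List.ofFn_const d delta
  rw [h1]
  exact foldr_replicate_delta d y

lemma delta_zero' : delta (0 : Fin d → ℕ) = 1 := by simp [delta]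

-- measurable cylinders
lemma measurableSet_agree (π : ℕ → Fin d → ℕ) (k : ℕ) :
    MeasurableSet {ω : ℕ → Fin d → ℕ | ∀ j ≤ k, ω j = π j} := by
  have h : {ω : ℕ → Fin d → ℕ | ∀ j ≤ k, ω j = π j}
      = ⋂ j ∈ Set.Iic k, (fun ω : ℕ → Fin d → ℕ => ω j) ⁻¹' {π j} := by
    ext ω; simp [Set.mem_iInter]
  rw [h]
  exact MeasurableSet.biInter (Set.to_countable _)
    (fun j _ => measurable_pi_apply j (measurableSet_singleton (π j)))

lemma singleton_eq_iInter (π : ℕ → Fin d → ℕ) :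
    ({π} : Set (ℕ → Fin d → ℕ)) = ⋂ k, {ω | ∀ j ≤ k, ω j = π j} := by
  ext ω
  simp only [Set.mem_singleton_iff, Set.mem_iInter, Set.mem_setOf_eq]
  constructor
  · rintro rfl; exact fun _ _ _ => rfl
  · intro h; funext j; exact h j j le_rfl

lemma meas_singleton {p : Fin d → (Fin d → ℕ) → ℝ}
    {μ : (Fin d → ℕ) → Measure (ℕ → Fin d → ℕ)} (hμ : IsGW p μ)
    (x0 : Fin d → ℕ) (π : ℕ → Fin d → ℕ) (h0 : π 0 = x0)
    (M : ℕ) (hM : ∀ j, M ≤ j → π j = 0) :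
    μ x0 {π} = ENNReal.ofReal (∏ j ∈ Finset.range M, trans p (π j) (π (j + 1))) := by
  have hprob := hμ.1 x0
  have hcyl : ∀ k, μ x0 {ω | ∀ j ≤ k, ω j = π j}
      = ENNReal.ofReal (∏ j ∈ Finset.range k, trans p (π j) (π (j + 1))) :=
    fun k => hμ.2 x0 k π h0
  have hmono : ∀ {j k : ℕ}, j ≤ k →
      {ω : ℕ → Fin d → ℕ | ∀ i ≤ k, ω i = π i} ⊆ {ω | ∀ i ≤ j, ω i = π i} :=
    fun hjk ω hω i hi => hω i (hi.trans hjk)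
  rw [singleton_eq_iInter π,
    Directed.measure_iInter (fun k => (measurableSet_agree π k).nullMeasurableSet)
      (fun j k => ⟨max j k, hmono (le_max_left j k), hmono (le_max_right j k)⟩)
      ⟨0, measure_ne_top _ _⟩]
  apply le_antisymm
  · exact iInf_le_of_le M (le_of_eq (hcyl M))
  · refine le_iInf fun k => ?_
    rcases le_or_gt M k with hMk | hkM
    · have hpe : ∏ j ∈ Finset.range M, trans p (π j) (π (j + 1))
          = ∏ j ∈ Finset.range k, trans p (π j) (π (j + 1)) := by
        refine Finset.prod_subset (Finset.range_subset_range.mpr hMk) fun j hj hj' => ?_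
        have hjM : M ≤ j := by
          simp only [Finset.mem_range] at hj hj'
          omega
        rw [hM j hjM, hM (j + 1) (by omega), trans_zero, delta_zero']
      rw [hcyl k, ← hpe]
    · rw [← hcyl M]
      exact measure_mono (hmono hkM.le)

lemma meas_singleton_ne {p : Fin d → (Fin d → ℕ) → ℝ}
    {μ : (Fin d → ℕ) → Measure (ℕ → Fin d → ℕ)} (hμ : IsGW p μ)
    (x0 : Fin d → ℕ) (π : ℕ → Fin d → ℕ) (h0 : π 0 ≠ x0) : μ x0 {π} = 0 := by
  have hprob := hμ.1 x0
  have h1 : μ x0 {ω | ∀ j ≤ 0, ω j = (fun _ => x0 : ℕ → Fin d → ℕ) j} = 1 := by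
    rw [hμ.2 x0 0 (fun _ => x0) rfl]
    simp
  have heq : {ω : ℕ → Fin d → ℕ | ∀ j ≤ 0, ω j = (fun _ => x0 : ℕ → Fin d → ℕ) j}
      = (fun ω : ℕ → Fin d → ℕ => ω 0) ⁻¹' {x0} := by
    ext ω; simp [Nat.le_zero]
  have hms : MeasurableSet ((fun ω : ℕ → Fin d → ℕ => ω 0) ⁻¹' {x0}) :=
    measurable_pi_apply 0 (measurableSet_singleton x0)
  have hc : μ x0 ((fun ω : ℕ → Fin d → ℕ => ω 0) ⁻¹' {x0})ᶜ = 0 := by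
    rw [measure_compl hms (measure_ne_top _ _), ← heq, h1, measure_univ]
    simp
  refine le_antisymm (le_trans (measure_mono ?_) hc.le) zero_le
  intro ω hω
  simp only [Set.mem_singleton_iff] at hω
  subst hω
  simpa using h0

lemma eventually_zero {π : ℕ → Fin d → ℕ} {n : Fin d → ℕ}
    (h : ∀ i, Ntot π i = (n i : ℝ≥0∞)) : ∃ m, ∀ j, m ≤ j → π j = 0 := by
  have key : ∀ i, ∃ m, ∀ j, m ≤ j → π j i = 0 := by
    intro i
    have hne : (∑' k, ((π k i : ℝ≥0) : ℝ≥0∞)) ≠ ⊤ := by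
      have h' := h i
      unfold Ntot at h'
      simp only [ENNReal.coe_natCast]
      rw [h']
      exact ENNReal.natCast_ne_top _
    have hs : Summable (fun k => (π k i : ℝ≥0)) :=
      ENNReal.tsum_coe_ne_top_iff_summable.mp hne
    have hsR : Summable (fun k => (π k i : ℝ)) := by
      have := NNReal.summable_coe.mpr hs
      simpa using this
    have hev : ∀ᶠ k in atTop, (π k i : ℝ) < 1 :=
      hsR.tendsto_atTop_zero.eventually_lt_const one_pos
    obtain ⟨m, hm⟩ := eventually_atTop.mp hev
    refine ⟨m, fun j hj => ?_⟩
    have h2 : π j i < 1 := by exact_mod_cast hm j hj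
    omega
  choose ms hms using key
  refine ⟨Finset.univ.sup ms, fun j hj => funext fun i => ?_⟩
  exact hms i j (le_trans (Finset.le_sup (Finset.mem_univ i)) hj)

lemma countable_T (n : Fin d → ℕ) :
    Set.Countable {ω : ℕ → Fin d → ℕ | ∀ i, Ntot ω i = (n i : ℝ≥0∞)} := by
  have hsub : {ω : ℕ → Fin d → ℕ | ∀ i, Ntot ω i = (n i : ℝ≥0∞)}
      ⊆ Set.range (fun g : ℕ →₀ (Fin d → ℕ) => ⇑g) := by
    intro π hπ
    obtain ⟨m, hm⟩ := eventually_zero hπ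
    refine ⟨Finsupp.ofSupportFinite π ?_, rfl⟩
    · refine Set.Finite.subset (Set.finite_Iio m) ?_
      intro j hj
      simp only [Function.mem_support] at hj
      simp only [Set.mem_Iio]
      by_contra hcon
      exact hj (hm j (by omega))
  exact (Set.countable_range _).mono hsub


/-- the GW process conditioned on total progeny `N = n` has the same
finite-dimensional distributions as the associated process conditioned on `N̄ = n`. -/
theorem cond_total_progeny_eq {d : ℕ} (p : Fin d → (Fin d → ℕ) → ℝ)
    (hp : ∀ i, IsPMF (p i))
    (a : Fin d → ℝ) (ha : ∀ i, 0 < a i)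
    (hfa : ∀ i, Summable fun k => p i k * npow a k)
    (pbar : Fin d → (Fin d → ℕ) → ℝ)
    (hpbar : ∀ i k, pbar i k = npow a k * p i k / (∑' k, p i k * npow a k))
    (μ μbar : (Fin d → ℕ) → Measure (ℕ → Fin d → ℕ))
    (hμ : IsGW p μ) (hμbar : IsGW pbar μbar) :
    ∀ (x0 : Fin d → ℕ) (m : ℕ) (ks : Fin m → ℕ), Monotone ks →
    ∀ (xs : Fin m → Fin d → ℕ) (n : Fin d → ℕ),
      μ x0 {ω | ∀ i, Ntot ω i = (n i : ℝ≥0∞)} ≠ 0 →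
      μ x0 ({ω | ∀ t, ω (ks t) = xs t} ∩ {ω | ∀ i, Ntot ω i = (n i : ℝ≥0∞)}) /
          μ x0 {ω | ∀ i, Ntot ω i = (n i : ℝ≥0∞)}
        = μbar x0 ({ω | ∀ t, ω (ks t) = xs t} ∩ {ω | ∀ i, Ntot ω i = (n i : ℝ≥0∞)}) /
            μbar x0 {ω | ∀ i, Ntot ω i = (n i : ℝ≥0∞)} := by
  intro x0 m ks _hks xs n _hT0
  classical
  set T : Set (ℕ → Fin d → ℕ) := {ω | ∀ i, Ntot ω i = (n i : ℝ≥0∞)} with hTdef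
  set E : Set (ℕ → Fin d → ℕ) := {ω | ∀ t, ω (ks t) = xs t} with hEdef
  have hTc : T.Countable := countable_T n
  set f : Fin d → ℝ := fun i => ∑' k, p i k * npow a k with hfdef
  have hfpos : ∀ i, 0 < f i := by
    intro i
    obtain ⟨k0, hk0⟩ : ∃ k0, 0 < p i k0 := by
      by_contra hcon
      push_neg at hcon
      have hz : ∀ k, p i k = 0 := fun k => le_antisymm (hcon k) ((hp i).nonneg k)
      have hhs := (hp i).hasSum
      rw [show p i = (fun _ => (0 : ℝ)) from funext hz] at hhs
      have h0 : (1 : ℝ) = 0 := hhs.unique hasSum_zero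
      norm_num at h0
    have hle : p i k0 * npow a k0 ≤ f i :=
      Summable.le_tsum (hfa i) k0 (fun j _ => mul_nonneg ((hp i).nonneg j) (npow_pos ha j).le)
    exact lt_of_lt_of_le (mul_pos hk0 (npow_pos ha k0)) hle
  set cR : ℝ := npow a (n - x0) * ∏ i, (f i)⁻¹ ^ n i with hcRdef
  have hcRpos : 0 < cR :=
    mul_pos (npow_pos ha _)
      (Finset.prod_pos fun i _ => pow_pos (inv_pos.mpr (hfpos i)) _)
  set c : ℝ≥0∞ := ENNReal.ofReal cR with hcdef
  have htrans : ∀ x y, trans pbar x y = npow a y * trans p x y * ∏ i, (f i)⁻¹ ^ x i := by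
    refine trans_scale a p pbar (fun i => (f i)⁻¹) (fun i k => ?_)
    rw [hpbar i k, div_eq_mul_inv]
  have hrel : ∀ π ∈ T, μbar x0 {π} = c * μ x0 {π} := by
    intro π hπ
    have hπ' : ∀ i, Ntot π i = (n i : ℝ≥0∞) := hπ
    by_cases h0 : π 0 = x0
    · obtain ⟨m0, hm0⟩ := eventually_zero hπ'
      set M := m0 + 1 with hMdef
      have hM : ∀ j, M ≤ j → π j = 0 := fun j hj => hm0 j (by omega)
      have hSig : ∀ i, ∑ j ∈ Finset.range M, π j i = n i := by
        intro i
        have h1 : (∑' k, (π k i : ℝ≥0∞)) = ∑ j ∈ Finset.range M, (π j i : ℝ≥0∞) := by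
          refine tsum_eq_sum fun b hb => ?_
          have hMb : M ≤ b := le_of_not_gt (fun hlt => hb (Finset.mem_range.mpr hlt))
          rw [hM b hMb]
          simp
        have h2 : ((∑ j ∈ Finset.range M, π j i : ℕ) : ℝ≥0∞) = ((n i : ℕ) : ℝ≥0∞) := by
          push_cast
          rw [← h1]
          exact hπ' i
        exact_mod_cast h2
      have hprod : ∏ j ∈ Finset.range M, trans pbar (π j) (π (j + 1))
          = cR * ∏ j ∈ Finset.range M, trans p (π j) (π (j + 1)) := by
        have hA : ∏ j ∈ Finset.range M, npow a (π (j + 1)) = npow a (n - x0) := by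
          unfold npow
          rw [Finset.prod_comm]
          refine Finset.prod_congr rfl fun i _ => ?_
          rw [Finset.prod_pow_eq_pow_sum]
          congr 1
          have hs' : (∑ j ∈ Finset.range M, π (j + 1) i) + π 0 i
              = ∑ j ∈ Finset.range (M + 1), π j i :=
            (Finset.sum_range_succ' (fun j => π j i) M).symm
          have hs'' : ∑ j ∈ Finset.range (M + 1), π j i = n i := by
            rw [Finset.sum_range_succ, hM M le_rfl, hSig i]
            simp
          have h0i : π 0 i = x0 i := congrFun h0 i
          simp only [Pi.sub_apply]
          omega
        have hB : ∏ j ∈ Finset.range M, ∏ i, (f i)⁻¹ ^ π j i = ∏ i, (f i)⁻¹ ^ n i := by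
          rw [Finset.prod_comm]
          exact Finset.prod_congr rfl fun i _ => by rw [Finset.prod_pow_eq_pow_sum, hSig i]
        calc ∏ j ∈ Finset.range M, trans pbar (π j) (π (j + 1))
            = ∏ j ∈ Finset.range M,
                (npow a (π (j + 1)) * trans p (π j) (π (j + 1)) * ∏ i, (f i)⁻¹ ^ π j i) :=
              Finset.prod_congr rfl (fun j _ => htrans _ _)
          _ = (∏ j ∈ Finset.range M, npow a (π (j + 1)))
                * (∏ j ∈ Finset.range M, ∏ i, (f i)⁻¹ ^ π j i)
                * ∏ j ∈ Finset.range M, trans p (π j) (π (j + 1)) := by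
              rw [Finset.prod_mul_distrib, Finset.prod_mul_distrib]
              ring
          _ = cR * ∏ j ∈ Finset.range M, trans p (π j) (π (j + 1)) := by
              rw [hA, hB, hcRdef]
      rw [meas_singleton hμbar x0 π h0 M hM, meas_singleton hμ x0 π h0 M hM, hprod,
        ENNReal.ofReal_mul hcRpos.le]
    · rw [meas_singleton_ne hμbar x0 π h0, meas_singleton_ne hμ x0 π h0, mul_zero]
  have hsum : ∀ S : Set (ℕ → Fin d → ℕ), S ⊆ T → μbar x0 S = c * μ x0 S := by
    intro S hST
    have hSc : S.Countable := hTc.mono hST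
    have hU : ⋃ b ∈ S, ({b} : Set (ℕ → Fin d → ℕ)) = S := Set.biUnion_of_singleton S
    have hpd : S.PairwiseDisjoint (fun b => ({b} : Set (ℕ → Fin d → ℕ))) :=
      fun b _ b' _ hne => Set.disjoint_singleton.mpr hne
    have h1 := measure_biUnion (μ := μ x0) hSc hpd (fun b _ => measurableSet_singleton b)
    have h2 := measure_biUnion (μ := μbar x0) hSc hpd (fun b _ => measurableSet_singleton b)
    rw [hU] at h1 h2
    rw [h1, h2, ← ENNReal.tsum_mul_left]
    exact tsum_congr fun π => hrel π.1 (hST π.2)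
  rw [hsum (E ∩ T) Set.inter_subset_right, hsum T subset_rfl,
    ENNReal.mul_div_mul_left _ _ (ENNReal.ofReal_pos.mpr hcRpos).ne' ENNReal.ofReal_ne_top]

end GW
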